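/- Let K be an algebraically closed field of characteristic zero, λ, ρ ∈ K, Γ = (γ1,γ2,γ3,γ4) ∈ K^4, and A = K⟨v,w⟩ the free associative K-algebra on two generators. Let ⟪-,-⟫ : A⊗A → A⊗A be a nonzero K-linear map satisfying the Leibniz rules with ⟪v,v⟫ = 0, ⟪w,w⟫ = 0, ⟪v,w⟫ = −(γ1/2)·(v⊗w) + (γ2/2)·(w⊗v) − (γ3/2)·(1⊗(vw)) + (γ4/2)·((wv)⊗1), and ⟪w,v⟫ = −((λ+ρ+γ2)/2)·(v⊗w) + ((λ+ρ+γ1)/2)·(w⊗v) − ((λ−ρ+γ4)/2)·(1⊗(wv)) + ((λ−ρ+γ3)/2)·((vw)⊗1). Then the two identities DJac(v,v,w) = −λ·(v ⊗₁ ⟪v,w⟫) and DJac(w,w,v) = −ρ·(w ⊗₁ ⟪w,v⟫) both hold if and only if one of the following is true: (1) ρ = −λ and Γ is one of (0,0,−2λ,−2λ), (0,0,−2λ,0), (0,0,0,−2λ), (0,0,0,0); (2) ρ = λ and Γ is one of (−2λ,−2λ,0,0), (−2λ,0,0,0), (0,−2λ,0,0), (0,0,0,0); (3) ρ = λ or ρ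 = −λ, and Γ is one of (0,−2λ,−2λ,0), (−2λ,0,0,−2λ). -/

import Mathlib

set_option maxHeartbeats 1000000
set_option synthInstance.maxHeartbeats 400000


open TensorProduct

noncomputable section

variable (K : Type*) [Field K]
variable (A : Type*) [Ring A] [Algebra K A]

/-- Leibniz rules for a double-bracket-type operation. -/
def LeibnizRules (D : A ⊗[K] A →ₗ[K] A ⊗[K] A) : Prop :=
  (∀ a b c : A,
      D (a ⊗ₜ[K] (b * c)) =
        (b ⊗ₜ[K] (1 : A)) * D (a ⊗ₜ[K] c) + D (a ⊗ₜ[K] b) * ((1 : A) ⊗ₜ[K] c))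
  ∧ (∀ a b c : A,
      D ((a * b) ⊗ₜ[K] c) =
        ((1 : A) ⊗ₜ[K] a) * D (b ⊗ₜ[K] c) + D (a ⊗ₜ[K] c) * (b ⊗ₜ[K] (1 : A)))

/-- The associated bracket `{a,b} = m(⟪a,b⟫)`. -/
def br (D : A ⊗[K] A →ₗ[K] A ⊗[K] A) (a b : A) : A :=
  LinearMap.mul' K A (D (a ⊗ₜ[K] b))

/-- The K-span of commutators `[A,A]`. -/
def commutatorSpan : Submodule K A :=
  Submodule.span K {x : A | ∃ a b : A, x = a * b - b * a}

/-- The flip on `A ⊗ A`. -/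
def flipT : A ⊗[K] A →ₗ[K] A ⊗[K] A := (TensorProduct.comm K A A).toLinearMap

/-- Swap of the last two tensor factors of `(A ⊗ A) ⊗ A`. -/
def swap23 : ((A ⊗[K] A) ⊗[K] A) →ₗ[K] ((A ⊗[K] A) ⊗[K] A) :=
  (TensorProduct.assoc K A A A).symm.toLinearMap ∘ₗ
    (LinearMap.lTensor A (TensorProduct.comm K A A).toLinearMap) ∘ₗ
    (TensorProduct.assoc K A A A).toLinearMap

/-- `⟪a, -⟫_L` on double tensors: `b ⊗ c ↦ ⟪a,b⟫ ⊗ c`. -/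
def dL (D : A ⊗[K] A →ₗ[K] A ⊗[K] A) (a : A) :
    A ⊗[K] A →ₗ[K] (A ⊗[K] A) ⊗[K] A :=
  LinearMap.rTensor A (D ∘ₗ TensorProduct.mk K A A a)

/-- `⟪a, -⟫_R` on double tensors: `b ⊗ c ↦ b ⊗ ⟪a,c⟫`. -/
def dR (D : A ⊗[K] A →ₗ[K] A ⊗[K] A) (a : A) :
    A ⊗[K] A →ₗ[K] (A ⊗[K] A) ⊗[K] A :=
  (TensorProduct.assoc K A A A).symm.toLinearMap ∘ₗ
    LinearMap.lTensor A (D ∘ₗ TensorProduct.mk K A A a)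

/-- `⟪-, c⟫_L` on double tensors: `b ⊗ b' ↦ ⟪b,c⟫' ⊗ b' ⊗ ⟪b,c⟫''`. -/
def dLfst (D : A ⊗[K] A →ₗ[K] A ⊗[K] A) (c : A) :
    A ⊗[K] A →ₗ[K] (A ⊗[K] A) ⊗[K] A :=
  swap23 K A ∘ₗ LinearMap.rTensor A (D ∘ₗ (TensorProduct.mk K A A).flip c)

/-- The double Jacobiator. -/
def DJac (D : A ⊗[K] A →ₗ[K] A ⊗[K] A) (a b c : A) : (A ⊗[K] A) ⊗[K] A :=
  dL K A D a (D (b ⊗ₜ[K] c)) - dR K A D b (D (a ⊗ₜ[K] c)) - dLfst K A D c (D (a ⊗ₜ[K] b))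

/-- `c ⊗₁ (-)` : `w' ⊗ w'' ↦ w' ⊗ c ⊗ w''`. -/
def otimes1 (c : A) : A ⊗[K] A →ₗ[K] (A ⊗[K] A) ⊗[K] A :=
  LinearMap.rTensor A ((TensorProduct.mk K A A).flip c)

variable {ι : Type*}

/-- Mixed double algebra structure of weight `lam` with respect to the generators `v`. -/
def IsMixedDouble (v : ι → A) (lam : ι → K) (D : A ⊗[K] A →ₗ[K] A ⊗[K] A) : Prop :=
  LeibnizRules K A D ∧
  ∀ i j : ι,
    D (v i ⊗ₜ[K] v j) + flipT K A (D (v j ⊗ₜ[K] v i)) =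
      ((lam i + lam j) / 2) • (v i ⊗ₜ[K] v j - v j ⊗ₜ[K] v i) +
      ((lam i - lam j) / 2) • ((1 : A) ⊗ₜ[K] (v i * v j) - (v j * v i) ⊗ₜ[K] (1 : A))

/-- Mixed double Poisson algebra structure of weight `lam` w.r.t. the generators `v`. -/
def IsMixedDoublePoisson (v : ι → A) (lam : ι → K) (D : A ⊗[K] A →ₗ[K] A ⊗[K] A) : Prop :=
  IsMixedDouble K A v lam D ∧
  ∀ i j k : ι,
    DJac K A D (v i) (v j) (v k) =
      (-((lam i + lam j) / 2)) • otimes1 K A (v j) (D (v i ⊗ₜ[K] v k)) +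
      ((lam i - lam j) / 2) •
        otimes1 K A (1 : A) (((1 : A) ⊗ₜ[K] v j) * D (v i ⊗ₜ[K] v k))

/-- Modified double Poisson bracket. -/
def IsModifiedDoublePoisson (D : A ⊗[K] A →ₗ[K] A ⊗[K] A) : Prop :=
  LeibnizRules K A D ∧
  (∀ a b : A, br K A D a b + br K A D b a ∈ commutatorSpan K A) ∧
  (∀ a b c : A,
    br K A D a (br K A D b c) - br K A D b (br K A D a c) - br K A D (br K A D a b) c = 0)

end



noncomputable section Aux4
variable {K : Type*} [Field K]

noncomputable def cf (m : FreeMonoid (Fin 2)) : FreeAlgebra K (Fin 2) →ₗ[K] K :=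
  Finsupp.lapply m ∘ₗ (MonoidAlgebra.coeffLinearEquiv K).toLinearMap ∘ₗ
    (FreeAlgebra.equivMonoidAlgebraFreeMonoid (R := K) (X := Fin 2)).toLinearMap

noncomputable def wrd (K : Type*) [Field K] (l : List (Fin 2)) : FreeAlgebra K (Fin 2) :=
  (l.map (FreeAlgebra.ι K)).prod

lemma equiv_wrd (l : List (Fin 2)) :
    FreeAlgebra.equivMonoidAlgebraFreeMonoid (R := K) (X := Fin 2) (wrd K l) =
      MonoidAlgebra.single (FreeMonoid.ofList l) 1 := by
  induction l with
  | nil => simp [wrd, FreeMonoid.ofList_nil, MonoidAlgebra.one_def]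
  | cons a l ih =>
      have : wrd K (a :: l) = FreeAlgebra.ι K a * wrd K l := by simp [wrd]
      rw [this, map_mul, ih]
      have ha : FreeAlgebra.equivMonoidAlgebraFreeMonoid (R := K) (X := Fin 2) (FreeAlgebra.ι K a)
          = MonoidAlgebra.single (FreeMonoid.of a) 1 := by
        simp [FreeAlgebra.equivMonoidAlgebraFreeMonoid]
      rw [ha, MonoidAlgebra.single_mul_single, one_mul, FreeMonoid.ofList_cons]

lemma cf_wrd (m l : List (Fin 2)) :
    cf (FreeMonoid.ofList m) (wrd K l) = if l = m then 1 else 0 := by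
  classical
  have h0 : cf (FreeMonoid.ofList m) (wrd K l) =
      Finsupp.lapply (R := K) (FreeMonoid.ofList m)
        ((FreeAlgebra.equivMonoidAlgebraFreeMonoid (R := K) (X := Fin 2)) (wrd K l)).coeff := rfl
  rw [h0, equiv_wrd, MonoidAlgebra.coeff_single, Finsupp.lapply_apply, Finsupp.single_apply]
  by_cases h : l = m
  · simp [h]
  · rw [if_neg (fun hc => h (FreeMonoid.ofList.injective hc)), if_neg h]

noncomputable def T3 (f g h : FreeAlgebra K (Fin 2) →ₗ[K] K) :
    (FreeAlgebra K (Fin 2) ⊗[K] FreeAlgebra K (Fin 2)) ⊗[K] FreeAlgebra K (Fin 2) →ₗ[K] K :=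
  (TensorProduct.lid K K).toLinearMap ∘ₗ
    TensorProduct.map ((TensorProduct.lid K K).toLinearMap ∘ₗ TensorProduct.map f g) h

lemma T3_tmul (f g h : FreeAlgebra K (Fin 2) →ₗ[K] K) (a b c : FreeAlgebra K (Fin 2)) :
    T3 f g h ((a ⊗ₜ[K] b) ⊗ₜ[K] c) = f a * g b * h c := by
  simp [T3, smul_eq_mul, mul_comm]

noncomputable def TW (i j k : List (Fin 2)) :
    (FreeAlgebra K (Fin 2) ⊗[K] FreeAlgebra K (Fin 2)) ⊗[K] FreeAlgebra K (Fin 2) →ₗ[K] K :=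
  T3 (cf (FreeMonoid.ofList i)) (cf (FreeMonoid.ofList j)) (cf (FreeMonoid.ofList k))

lemma TW_wrd (i j k a b c : List (Fin 2)) :
    TW (K := K) i j k ((wrd K a ⊗ₜ[K] wrd K b) ⊗ₜ[K] wrd K c) =
      if a = i ∧ b = j ∧ c = k then 1 else 0 := by
  classical
  rw [TW, T3_tmul, cf_wrd, cf_wrd, cf_wrd]
  by_cases h1 : a = i <;> by_cases h2 : b = j <;> by_cases h3 : c = k <;>
    simp [h1, h2, h3]

lemma indep (i j : Fin 2) (hij : i ≠ j) (c1 c2 c3 c4 c5 c6 c7 c8 : K)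
    (h : c1 • ((FreeAlgebra.ι K i ⊗ₜ[K] FreeAlgebra.ι K i) ⊗ₜ[K] FreeAlgebra.ι K j)
      + c2 • ((FreeAlgebra.ι K i ⊗ₜ[K] (1 : FreeAlgebra K (Fin 2))) ⊗ₜ[K] (FreeAlgebra.ι K i * FreeAlgebra.ι K j))
      + c3 • ((FreeAlgebra.ι K j ⊗ₜ[K] FreeAlgebra.ι K i) ⊗ₜ[K] FreeAlgebra.ι K i)
      + c4 • (((FreeAlgebra.ι K j * FreeAlgebra.ι K i) ⊗ₜ[K] (1 : FreeAlgebra K (Fin 2))) ⊗ₜ[K] FreeAlgebra.ι K i)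
      + c5 • (((1 : FreeAlgebra K (Fin 2)) ⊗ₜ[K] (FreeAlgebra.ι K i * FreeAlgebra.ι K i)) ⊗ₜ[K] FreeAlgebra.ι K j)
      + c6 • (((1 : FreeAlgebra K (Fin 2)) ⊗ₜ[K] FreeAlgebra.ι K i) ⊗ₜ[K] (FreeAlgebra.ι K i * FreeAlgebra.ι K j))
      + c7 • ((FreeAlgebra.ι K j ⊗ₜ[K] (FreeAlgebra.ι K i * FreeAlgebra.ι K i)) ⊗ₜ[K] (1 : FreeAlgebra K (Fin 2)))
      + c8 • (((FreeAlgebra.ι K j * FreeAlgebra.ι K i) ⊗ₜ[K] FreeAlgebra.ι K i) ⊗ₜ[K] (1 : FreeAlgebra K (Fin 2))) = 0) :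
    c1 = 0 ∧ c2 = 0 ∧ c3 = 0 ∧ c4 = 0 ∧ c5 = 0 ∧ c6 = 0 ∧ c7 = 0 ∧ c8 = 0 := by
  have e1 : ∀ a : Fin 2, FreeAlgebra.ι K a = wrd K [a] := by intro a; simp [wrd]
  have e2 : ∀ a b : Fin 2, FreeAlgebra.ι K a * FreeAlgebra.ι K b = wrd K [a, b] := by intro a b; simp [wrd]
  have e0 : (1 : FreeAlgebra K (Fin 2)) = wrd K [] := by simp [wrd]
  rw [e2 i i, e2 i j, e2 j i, e0, e1 i, e1 j] at h
  refine ⟨?_, ?_, ?_, ?_, ?_, ?_, ?_, ?_⟩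
  · have := congrArg (TW (K := K) [i] [i] [j]) h
    simpa [map_add, map_smul, TW_wrd, smul_eq_mul, hij] using this
  · have := congrArg (TW (K := K) [i] [] [i, j]) h
    simpa [map_add, map_smul, TW_wrd, smul_eq_mul, hij] using this
  · have := congrArg (TW (K := K) [j] [i] [i]) h
    simpa [map_add, map_smul, TW_wrd, smul_eq_mul, hij] using this
  · have := congrArg (TW (K := K) [j, i] [] [i]) h
    simpa [map_add, map_smul, TW_wrd, smul_eq_mul, hij] using this
  · have := congrArg (TW (K := K) [] [i, i] [j]) h
    simpa [map_add, map_smul, TW_wrd, smul_eq_mul, hij] using this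
  · have := congrArg (TW (K := K) [] [i] [i, j]) h
    simpa [map_add, map_smul, TW_wrd, smul_eq_mul, hij] using this
  · have := congrArg (TW (K := K) [j] [i, i] []) h
    simpa [map_add, map_smul, TW_wrd, smul_eq_mul, hij] using this
  · have := congrArg (TW (K := K) [j, i] [i] []) h
    simpa [map_add, map_smul, TW_wrd, smul_eq_mul, hij] using this

end Aux4
noncomputable section Aux3
variable {K : Type*} [Field K] {A : Type*} [Ring A] [Algebra K A]

lemma expand_lemma (D : A ⊗[K] A →ₗ[K] A ⊗[K] A) (hL : LeibnizRules K A D)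
    (x y : A) (a1 a2 a3 a4 μ : K)
    (hxx : D (x ⊗ₜ[K] x) = 0)
    (hxy : D (x ⊗ₜ[K] y) =
      a1 • (x ⊗ₜ[K] y) + a2 • (y ⊗ₜ[K] x) + a3 • ((1 : A) ⊗ₜ[K] (x * y)) +
        a4 • ((y * x) ⊗ₜ[K] (1 : A))) :
    DJac K A D x x y + μ • otimes1 K A x (D (x ⊗ₜ[K] y)) =
      (μ * a1 - a1 * a1) • ((x ⊗ₜ[K] x) ⊗ₜ[K] y)
      + (-(a1 * a3)) • ((x ⊗ₜ[K] (1 : A)) ⊗ₜ[K] (x * y))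
      + (a2 * a2 + μ * a2) • ((y ⊗ₜ[K] x) ⊗ₜ[K] x)
      + (a2 * a4) • (((y * x) ⊗ₜ[K] (1 : A)) ⊗ₜ[K] x)
      + (-(a1 * a3)) • (((1 : A) ⊗ₜ[K] (x * x)) ⊗ₜ[K] y)
      + (μ * a3 - a3 * a3) • (((1 : A) ⊗ₜ[K] x) ⊗ₜ[K] (x * y))
      + (a2 * a4) • ((y ⊗ₜ[K] (x * x)) ⊗ₜ[K] (1 : A))
      + (a4 * a4 + μ * a4) • (((y * x) ⊗ₜ[K] x) ⊗ₜ[K] (1 : A)) := by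
  have hx1 : D (x ⊗ₜ[K] (1 : A)) = 0 := by
    have h := hL.1 x 1 1
    rw [mul_one, ← Algebra.TensorProduct.one_def, one_mul, mul_one] at h
    exact left_eq_add.mp h
  have hxxy : D (x ⊗ₜ[K] (x * y)) = (x ⊗ₜ[K] (1 : A)) * D (x ⊗ₜ[K] y) := by
    have h := hL.1 x x y
    rw [hxx, zero_mul, add_zero] at h
    exact h
  have hxyx : D (x ⊗ₜ[K] (y * x)) = D (x ⊗ₜ[K] y) * ((1 : A) ⊗ₜ[K] x) := by
    have h := hL.1 x y x
    rw [hxx, mul_zero, zero_add] at h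
    exact h
  rw [DJac, hxx]
  rw [hxy]
  simp only [dL, dR, dLfst, otimes1, swap23, LinearMap.coe_comp, Function.comp_apply,
    map_add, map_smul, LinearMap.map_zero, LinearMap.rTensor_tmul, LinearMap.lTensor_tmul,
    TensorProduct.mk_apply, TensorProduct.assoc_tmul, TensorProduct.assoc_symm_tmul,
    LinearEquiv.coe_coe, sub_zero]
  rw [hxx, hx1, hxy, hxxy, hxyx, hxy]
  simp only [Algebra.TensorProduct.tmul_mul_tmul, mul_add, add_mul, mul_smul_comm,
    smul_mul_assoc, one_mul, mul_one, map_add, map_smul, LinearMap.map_zero,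
    LinearMap.rTensor_tmul, LinearMap.lTensor_tmul, TensorProduct.assoc_tmul,
    TensorProduct.assoc_symm_tmul, LinearEquiv.coe_coe, LinearMap.coe_comp,
    Function.comp_apply, smul_zero, tmul_zero, zero_tmul, mul_assoc,
    TensorProduct.tmul_add, TensorProduct.add_tmul, LinearMap.flip_apply,
    ← TensorProduct.smul_tmul', TensorProduct.tmul_smul]
  simp only [TensorProduct.mk_apply, map_zero, smul_zero]
  module

end Aux3
section Scal
variable {K : Type*} [Field K] [CharZero K]

/-- RHS of the classification -/
def RHSprop (l r g1 g2 g3 g4 : K) : Prop :=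
  (r = -l ∧ ((g1 = 0 ∧ g2 = 0 ∧ g3 = -(2 * l) ∧ g4 = -(2 * l)) ∨
      (g1 = 0 ∧ g2 = 0 ∧ g3 = -(2 * l) ∧ g4 = 0) ∨
      (g1 = 0 ∧ g2 = 0 ∧ g3 = 0 ∧ g4 = -(2 * l)) ∨
      (g1 = 0 ∧ g2 = 0 ∧ g3 = 0 ∧ g4 = 0))) ∨
  (r = l ∧ ((g1 = -(2 * l) ∧ g2 = -(2 * l) ∧ g3 = 0 ∧ g4 = 0) ∨
      (g1 = -(2 * l) ∧ g2 = 0 ∧ g3 = 0 ∧ g4 = 0) ∨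
      (g1 = 0 ∧ g2 = -(2 * l) ∧ g3 = 0 ∧ g4 = 0) ∨
      (g1 = 0 ∧ g2 = 0 ∧ g3 = 0 ∧ g4 = 0))) ∨
  ((r = l ∨ r = -l) ∧ ((g1 = 0 ∧ g2 = -(2 * l) ∧ g3 = -(2 * l) ∧ g4 = 0) ∨
      (g1 = -(2 * l) ∧ g2 = 0 ∧ g3 = 0 ∧ g4 = -(2 * l))))

lemma sq0 {l g : K} (p : g * (g + 2 * l) = 0) (hl : l = 0) : g = 0 := by
  apply mul_self_eq_zero.mp
  linear_combination p - 2 * g * hl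

lemma deg_case {l r g1 g2 g3 g4 : K} (hl : l = 0) (hr : r = l ∨ r = -l)
    (p1 : g1 * (g1 + 2 * l) = 0) (p2 : g2 * (g2 + 2 * l) = 0)
    (p3 : g3 * (g3 + 2 * l) = 0) (p4 : g4 * (g4 + 2 * l) = 0) :
    RHSprop l r g1 g2 g3 g4 := by
  have hr0 : r = -l := by
    rcases hr with h | h
    · linear_combination h + 2 * hl
    · exact h
  exact Or.inl ⟨hr0, Or.inr (Or.inr (Or.inr ⟨sq0 p1 hl, sq0 p2 hl, sq0 p3 hl, sq0 p4 hl⟩))⟩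

lemma scalar_main {l r g1 g2 g3 g4 : K}
    (p1 : g1 * (g1 + 2 * l) = 0) (p2 : g2 * (g2 + 2 * l) = 0)
    (p3 : g3 * (g3 + 2 * l) = 0) (p4 : g4 * (g4 + 2 * l) = 0)
    (p13 : g1 * g3 = 0) (p24 : g2 * g4 = 0)
    (q14 : (g1 + l + r) * (g4 + l - r) = 0)
    (q23 : (g2 + l + r) * (g3 + l - r) = 0)
    (hr : r = l ∨ r = -l) :
    RHSprop l r g1 g2 g3 g4 := by
  rcases hr with hr | hr
  · -- r = l
    subst hr
    rcases mul_eq_zero.mp p3 with h3 | h3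
    · rcases mul_eq_zero.mp p4 with h4 | h4
      · -- g3 = 0, g4 = 0
        rcases mul_eq_zero.mp p1 with h1 | h1 <;> rcases mul_eq_zero.mp p2 with h2 | h2
        · exact Or.inr (Or.inl ⟨rfl, Or.inr (Or.inr (Or.inr ⟨h1, h2, h3, h4⟩))⟩)
        · exact Or.inr (Or.inl ⟨rfl, Or.inr (Or.inr (Or.inl ⟨h1, by linear_combination h2, h3, h4⟩))⟩)
        · exact Or.inr (Or.inl ⟨rfl, Or.inr (Or.inl ⟨by linear_combination h1, h2, h3, h4⟩)⟩)
        · exact Or.inr (Or.inl ⟨rfl, Or.inl ⟨by linear_combination h1, by linear_combination h2, h3, h4⟩⟩)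
      · -- g3 = 0, g4 = -2l
        rcases mul_eq_zero.mp q14 with h1 | h1
        · -- g1 = -2l
          rcases mul_eq_zero.mp p24 with h2 | h2
          · exact Or.inr (Or.inr ⟨Or.inl rfl, Or.inr ⟨by linear_combination h1, h2, h3, by linear_combination h4⟩⟩)
          · -- g4 = 0 and g4 = -2l : degenerate
            exact deg_case (by linear_combination (h4 - h2) / 2) (Or.inl rfl) p1 p2 p3 p4
        · -- g4 + l - l = 0 i.e. g4 = 0, degenerate
          exact deg_case (by linear_combination (h4 - h1) / 2) (Or.inl rfl) p1 p2 p3 p4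
    · -- g3 = -2l
      rcases mul_eq_zero.mp p13 with h1 | h1
      · rcases mul_eq_zero.mp q23 with h2 | h2
        · -- g2 = -2l
          rcases mul_eq_zero.mp p24 with h4 | h4
          · -- g2 = 0 and -2l : degenerate
            exact deg_case (by linear_combination (h2 - h4) / 2) (Or.inl rfl) p1 p2 p3 p4
          · exact Or.inr (Or.inr ⟨Or.inl rfl, Or.inl ⟨h1, by linear_combination h2, by linear_combination h3, h4⟩⟩)
        · -- g3 = 0 and -2l : degenerate
          exact deg_case (by linear_combination (h3 - h2) / 2) (Or.inl rfl) p1 p2 p3 p4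
      · exact deg_case (by linear_combination (h3 - h1) / 2) (Or.inl rfl) p1 p2 p3 p4
  · -- r = -l
    subst hr
    rcases mul_eq_zero.mp p1 with h1 | h1
    · rcases mul_eq_zero.mp p2 with h2 | h2
      · rcases mul_eq_zero.mp p3 with h3 | h3 <;> rcases mul_eq_zero.mp p4 with h4 | h4
        · exact Or.inl ⟨rfl, Or.inr (Or.inr (Or.inr ⟨h1, h2, h3, h4⟩))⟩
        · exact Or.inl ⟨rfl, Or.inr (Or.inr (Or.inl ⟨h1, h2, h3, by linear_combination h4⟩))⟩
        · exact Or.inl ⟨rfl, Or.inr (Or.inl ⟨h1, h2, by linear_combination h3, h4⟩)⟩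
        · exact Or.inl ⟨rfl, Or.inl ⟨h1, h2, by linear_combination h3, by linear_combination h4⟩⟩
      · -- g2 = -2l
        rcases mul_eq_zero.mp q23 with h5 | h5
        · -- g2 + l - l = 0 : g2 = 0 and -2l : degenerate
          exact deg_case (by linear_combination (h2 - h5) / 2) (Or.inr rfl) p1 p2 p3 p4
        · -- g3 = -2l  (g3 + l + l = 0)
          rcases mul_eq_zero.mp p24 with h6 | h6
          · exact deg_case (by linear_combination (h2 - h6) / 2) (Or.inr rfl) p1 p2 p3 p4
          · exact Or.inr (Or.inr ⟨Or.inr rfl, Or.inl ⟨h1, by linear_combination h2, by linear_combination h5, h6⟩⟩)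
    · -- g1 = -2l
      rcases mul_eq_zero.mp q14 with h5 | h5
      · exact deg_case (by linear_combination (h1 - h5) / 2) (Or.inr rfl) p1 p2 p3 p4
      · -- g4 = -2l (g4 + l + l = 0)
        rcases mul_eq_zero.mp p24 with h6 | h6
        · rcases mul_eq_zero.mp p13 with h7 | h7
          · exact deg_case (by linear_combination (h1 - h7) / 2) (Or.inr rfl) p1 p2 p3 p4
          · exact Or.inr (Or.inr ⟨Or.inr rfl, Or.inr ⟨by linear_combination h1, h6, h7, by linear_combination h5⟩⟩)
        · exact deg_case (by linear_combination (h5 - h6) / 2) (Or.inr rfl) p1 p2 p3 p4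

end Scal


noncomputable section KeyIff
variable {K : Type*} [Field K]

open FreeAlgebra in
lemma key_iff (i j : Fin 2) (hij : i ≠ j)
    (D : FreeAlgebra K (Fin 2) ⊗[K] FreeAlgebra K (Fin 2) →ₗ[K] FreeAlgebra K (Fin 2) ⊗[K] FreeAlgebra K (Fin 2))
    (hL : LeibnizRules K (FreeAlgebra K (Fin 2)) D) (a1 a2 a3 a4 μ : K)
    (hxx : D (ι K i ⊗ₜ[K] ι K i) = 0)
    (hxy : D (ι K i ⊗ₜ[K] ι K j) =
      a1 • (ι K i ⊗ₜ[K] ι K j) + a2 • (ι K j ⊗ₜ[K] ι K i)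
      + a3 • ((1 : FreeAlgebra K (Fin 2)) ⊗ₜ[K] (ι K i * ι K j))
      + a4 • ((ι K j * ι K i) ⊗ₜ[K] (1 : FreeAlgebra K (Fin 2)))) :
    (DJac K (FreeAlgebra K (Fin 2)) D (ι K i) (ι K i) (ι K j) =
        (-μ) • otimes1 K (FreeAlgebra K (Fin 2)) (ι K i) (D (ι K i ⊗ₜ[K] ι K j))) ↔
      (μ * a1 - a1 * a1 = 0 ∧ a1 * a3 = 0 ∧ a2 * a2 + μ * a2 = 0 ∧ a2 * a4 = 0
        ∧ μ * a3 - a3 * a3 = 0 ∧ a4 * a4 + μ * a4 = 0) := by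
  have hexp := expand_lemma (K := K) (A := FreeAlgebra K (Fin 2)) D hL (ι K i) (ι K j)
    a1 a2 a3 a4 μ hxx hxy
  constructor
  · intro hEq
    have h0 : DJac K (FreeAlgebra K (Fin 2)) D (ι K i) (ι K i) (ι K j) +
        μ • otimes1 K (FreeAlgebra K (Fin 2)) (ι K i) (D (ι K i ⊗ₜ[K] ι K j)) = 0 := by
      rw [hEq, ← add_smul, neg_add_cancel, zero_smul]
    rw [hexp] at h0
    obtain ⟨h1, h2, h3, h4, h5, h6, h7, h8⟩ := indep i j hij _ _ _ _ _ _ _ _ h0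
    exact ⟨h1, neg_eq_zero.mp h2, h3, h4, h6, h8⟩
  · rintro ⟨k1, k2, k3, k4, k5, k6⟩
    rw [k1, k2, k3, k4, k5, k6, neg_zero] at hexp
    simp only [zero_smul, add_zero, zero_add] at hexp
    have := eq_neg_of_add_eq_zero_left hexp
    rw [this]
    exact (neg_smul μ _).symm

end KeyIff


theorem stmt13 {K : Type*} [Field K] [IsAlgClosed K] [CharZero K]
    (lam ρ γ1 γ2 γ3 γ4 : K)
    (D : FreeAlgebra K (Fin 2) ⊗[K] FreeAlgebra K (Fin 2) →ₗ[K] FreeAlgebra K (Fin 2) ⊗[K] FreeAlgebra K (Fin 2)) (hD0 : D ≠ 0)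
    (hL : LeibnizRules K (FreeAlgebra K (Fin 2)) D)
    (hvv : D (FreeAlgebra.ι K (0 : Fin 2) ⊗ₜ[K] FreeAlgebra.ι K (0 : Fin 2)) = 0)
    (hww : D (FreeAlgebra.ι K (1 : Fin 2) ⊗ₜ[K] FreeAlgebra.ι K (1 : Fin 2)) = 0)
    (hvw : D (FreeAlgebra.ι K (0 : Fin 2) ⊗ₜ[K] FreeAlgebra.ι K (1 : Fin 2)) =
      (-(γ1 / 2)) • (FreeAlgebra.ι K (0 : Fin 2) ⊗ₜ[K] FreeAlgebra.ι K (1 : Fin 2)) + (γ2 / 2) • (FreeAlgebra.ι K (1 : Fin 2) ⊗ₜ[K] FreeAlgebra.ι K (0 : Fin 2)) +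
      (-(γ3 / 2)) • ((1 : FreeAlgebra K (Fin 2)) ⊗ₜ[K] (FreeAlgebra.ι K (0 : Fin 2) * FreeAlgebra.ι K (1 : Fin 2))) +
      (γ4 / 2) • ((FreeAlgebra.ι K (1 : Fin 2) * FreeAlgebra.ι K (0 : Fin 2)) ⊗ₜ[K] (1 : FreeAlgebra K (Fin 2))))
    (hwv : D (FreeAlgebra.ι K (1 : Fin 2) ⊗ₜ[K] FreeAlgebra.ι K (0 : Fin 2)) =
      (-((lam + ρ + γ2) / 2)) • (FreeAlgebra.ι K (0 : Fin 2) ⊗ₜ[K] FreeAlgebra.ι K (1 : Fin 2)) +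
      ((lam + ρ + γ1) / 2) • (FreeAlgebra.ι K (1 : Fin 2) ⊗ₜ[K] FreeAlgebra.ι K (0 : Fin 2)) +
      (-((lam - ρ + γ4) / 2)) • ((1 : FreeAlgebra K (Fin 2)) ⊗ₜ[K] (FreeAlgebra.ι K (1 : Fin 2) * FreeAlgebra.ι K (0 : Fin 2))) +
      ((lam - ρ + γ3) / 2) • ((FreeAlgebra.ι K (0 : Fin 2) * FreeAlgebra.ι K (1 : Fin 2)) ⊗ₜ[K] (1 : FreeAlgebra K (Fin 2)))) :
    (DJac K (FreeAlgebra K (Fin 2)) D (FreeAlgebra.ι K (0 : Fin 2)) (FreeAlgebra.ι K (0 : Fin 2)) (FreeAlgebra.ι K (1 : Fin 2)) =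
        (-lam) • otimes1 K (FreeAlgebra K (Fin 2)) (FreeAlgebra.ι K (0 : Fin 2)) (D (FreeAlgebra.ι K (0 : Fin 2) ⊗ₜ[K] FreeAlgebra.ι K (1 : Fin 2))) ∧
      DJac K (FreeAlgebra K (Fin 2)) D (FreeAlgebra.ι K (1 : Fin 2)) (FreeAlgebra.ι K (1 : Fin 2)) (FreeAlgebra.ι K (0 : Fin 2)) =
        (-ρ) • otimes1 K (FreeAlgebra K (Fin 2)) (FreeAlgebra.ι K (1 : Fin 2)) (D (FreeAlgebra.ι K (1 : Fin 2) ⊗ₜ[K] FreeAlgebra.ι K (0 : Fin 2)))) ↔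
    ((ρ = -lam ∧ ((γ1 = 0 ∧ γ2 = 0 ∧ γ3 = -(2 * lam) ∧ γ4 = -(2 * lam)) ∨ (γ1 = 0 ∧ γ2 = 0 ∧ γ3 = -(2 * lam) ∧ γ4 = 0) ∨ (γ1 = 0 ∧ γ2 = 0 ∧ γ3 = 0 ∧ γ4 = -(2 * lam)) ∨ (γ1 = 0 ∧ γ2 = 0 ∧ γ3 = 0 ∧ γ4 = 0))) ∨
     (ρ = lam ∧ ((γ1 = -(2 * lam) ∧ γ2 = -(2 * lam) ∧ γ3 = 0 ∧ γ4 = 0) ∨ (γ1 = -(2 * lam) ∧ γ2 = 0 ∧ γ3 = 0 ∧ γ4 = 0) ∨ (γ1 = 0 ∧ γ2 = -(2 * lam) ∧ γ3 = 0 ∧ γ4 = 0) ∨ (γ1 = 0 ∧ γ2 = 0 ∧ γ3 = 0 ∧ γ4 = 0))) ∨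
     ((ρ = lam ∨ ρ = -lam) ∧ ((γ1 = 0 ∧ γ2 = -(2 * lam) ∧ γ3 = -(2 * lam) ∧ γ4 = 0) ∨ (γ1 = -(2 * lam) ∧ γ2 = 0 ∧ γ3 = 0 ∧ γ4 = -(2 * lam))))) := by
  classical
  set v := FreeAlgebra.ι K (0 : Fin 2) with hv
  set w := FreeAlgebra.ι K (1 : Fin 2) with hw
  have hij : (0 : Fin 2) ≠ 1 := by decide
  have hwv' : D (w ⊗ₜ[K] v) =
      ((lam + ρ + γ1) / 2) • (w ⊗ₜ[K] v) + (-((lam + ρ + γ2) / 2)) • (v ⊗ₜ[K] w)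
      + (-((lam - ρ + γ4) / 2)) • ((1 : FreeAlgebra K (Fin 2)) ⊗ₜ[K] (w * v))
      + ((lam - ρ + γ3) / 2) • ((v * w) ⊗ₜ[K] (1 : FreeAlgebra K (Fin 2))) := by
    rw [hwv]; module
  rw [key_iff 0 1 hij D hL (-(γ1 / 2)) (γ2 / 2) (-(γ3 / 2)) (γ4 / 2) lam hvv hvw,
    key_iff 1 0 hij.symm D hL ((lam + ρ + γ1) / 2) (-((lam + ρ + γ2) / 2))
      (-((lam - ρ + γ4) / 2)) ((lam - ρ + γ3) / 2) ρ hww hwv']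
  constructor
  · rintro ⟨⟨e1, e2, e3, e4, e5, e6⟩, f1, f2, f3, f4, f5, f6⟩
    have p1 : γ1 * (γ1 + 2 * lam) = 0 := by linear_combination (-4 : K) * e1
    have p13 : γ1 * γ3 = 0 := by linear_combination (4 : K) * e2
    have p2 : γ2 * (γ2 + 2 * lam) = 0 := by linear_combination (4 : K) * e3
    have p24 : γ2 * γ4 = 0 := by linear_combination (4 : K) * e4
    have p3 : γ3 * (γ3 + 2 * lam) = 0 := by linear_combination (-4 : K) * e5
    have p4 : γ4 * (γ4 + 2 * lam) = 0 := by linear_combination (4 : K) * e6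
    have q1 : (γ1 + lam + ρ) * (γ1 + lam - ρ) = 0 := by linear_combination (-4 : K) * f1
    have q14 : (γ1 + lam + ρ) * (γ4 + lam - ρ) = 0 := by linear_combination (-4 : K) * f2
    have q23 : (γ2 + lam + ρ) * (γ3 + lam - ρ) = 0 := by linear_combination (-4 : K) * f4
    have hl2 : (ρ - lam) * (ρ + lam) = 0 := by linear_combination p1 - q1
    have hr : ρ = lam ∨ ρ = -lam := by
      rcases mul_eq_zero.mp hl2 with h | h
      · exact Or.inl (sub_eq_zero.mp h)
      · exact Or.inr (eq_neg_of_add_eq_zero_left h)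
    exact scalar_main p1 p2 p3 p4 p13 p24 q14 q23 hr
  · rintro (⟨hr, ⟨h1, h2, h3, h4⟩ | ⟨h1, h2, h3, h4⟩ | ⟨h1, h2, h3, h4⟩ | ⟨h1, h2, h3, h4⟩⟩ |
      ⟨hr, ⟨h1, h2, h3, h4⟩ | ⟨h1, h2, h3, h4⟩ | ⟨h1, h2, h3, h4⟩ | ⟨h1, h2, h3, h4⟩⟩ |
      ⟨hr | hr, ⟨h1, h2, h3, h4⟩ | ⟨h1, h2, h3, h4⟩⟩) <;>
    subst h1 <;> subst h2 <;> subst h3 <;> subst h4 <;> subst hr <;>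
    refine ⟨⟨?_, ?_, ?_, ?_, ?_, ?_⟩, ?_, ?_, ?_, ?_, ?_, ?_⟩ <;> ring
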